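/- For any integer vector y with entries in {0,1}, (∑_i y_i mod 2) ≡ ∑_i y_i − 2·∑_{i<j} y_i y_j + 4·∑_{i<j<k} y_i y_j y_k (mod 8). -/
import Mathlib


theorem sum_mod_two_modeq_eight (n : ℕ) (y : Fin n → ℤ)
    (hy : ∀ i, y i = 0 ∨ y i = 1) :
    (∑ i, y i) % 2 ≡
      (∑ i, y i) -
        2 * (∑ p ∈ Finset.univ.filter (fun p : Fin n × Fin n => p.1 < p.2), y p.1 * y p.2) +
        4 * (∑ t ∈ Finset.univ.filter
              (fun t : Fin n × Fin n × Fin n => t.1 < t.2.1 ∧ t.2.1 < t.2.2),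
              y t.1 * y t.2.1 * y t.2.2)
      [ZMOD 8] := by
  have hsq : ∀ i, y i * y i = y i := fun i => by rcases hy i with h | h <;> rw [h] <;> ring
  have hP : (∑ p ∈ Finset.univ.filter (fun p : Fin n × Fin n => p.1 < p.2), y p.1 * y p.2)
      = ∑ i, ∑ j, if i < j then y i * y j else 0 := by
    rw [Finset.sum_filter, Fintype.sum_prod_type]
  have hT : (∑ t ∈ Finset.univ.filter
        (fun t : Fin n × Fin n × Fin n => t.1 < t.2.1 ∧ t.2.1 < t.2.2),
        y t.1 * y t.2.1 * y t.2.2)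
      = ∑ i, ∑ j, ∑ k, if i < j ∧ j < k then y i * y j * y k else 0 := by
    rw [Finset.sum_filter]
    simp only [Fintype.sum_prod_type]
  rw [hP, hT]
  set S : ℤ := ∑ i, y i with hS
  set A : ℤ := ∑ i, ∑ j, if i < j then y i * y j else 0 with hA
  set T : ℤ := ∑ i, ∑ j, ∑ k, if i < j ∧ j < k then y i * y j * y k else 0 with hTdef
  -- swap lemma for triple sums
  have hswap3 : ∀ f : Fin n → Fin n → Fin n → ℤ,
      (∑ i, ∑ j, ∑ k, f i j k) = ∑ k, ∑ i, ∑ j, f i j k := by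
    intro f
    calc (∑ i, ∑ j, ∑ k, f i j k) = ∑ i, ∑ k, ∑ j, f i j k :=
          Finset.sum_congr rfl fun i _ => Finset.sum_comm
      _ = ∑ k, ∑ i, ∑ j, f i j k := Finset.sum_comm
  -- diagonal sum
  have hdiag : (∑ i, ∑ j, if i = j then y i * y j else 0) = S := by
    rw [hS]
    refine Finset.sum_congr rfl fun i _ => ?_
    rw [Finset.sum_ite_eq Finset.univ i (fun j => y i * y j)]
    simp [hsq i]
  -- swapped pair sum
  have hswap : (∑ i, ∑ j, if j < i then y i * y j else 0) = A := by
    rw [Finset.sum_comm, hA]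
    refine Finset.sum_congr rfl fun i _ => Finset.sum_congr rfl fun j _ => ?_
    exact if_congr Iff.rfl (mul_comm _ _) rfl
  -- first key identity : S * S = 2 * A + S
  have h2 : S * S = 2 * A + S := by
    have expand : S * S = ∑ i, ∑ j, y i * y j := by
      rw [hS, Finset.sum_mul_sum]
    have split : ∀ i j : Fin n, y i * y j =
        (if i < j then y i * y j else 0) + (if j < i then y i * y j else 0) +
          (if i = j then y i * y j else 0) := by
      intro i j
      rcases lt_trichotomy i j with h | h | h
      · simp [h, asymm h, h.ne]
      · simp [h]
      · simp [h, asymm h, h.ne']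
    calc S * S = ∑ i, ∑ j, ((if i < j then y i * y j else 0) + (if j < i then y i * y j else 0)
            + (if i = j then y i * y j else 0)) := by
          rw [expand]
          exact Finset.sum_congr rfl fun i _ => Finset.sum_congr rfl fun j _ => split i j
      _ = (∑ i, ∑ j, if i < j then y i * y j else 0)
            + (∑ i, ∑ j, if j < i then y i * y j else 0)
            + (∑ i, ∑ j, if i = j then y i * y j else 0) := by
          simp only [Finset.sum_add_distrib]
      _ = A + A + S := by rw [← hA, hswap, hdiag]
      _ = 2 * A + S := by ring
  -- pointwise 5-way split
  have hsplit5 : ∀ (i j k : Fin n) (v : ℤ),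
      (if i < j then v else 0) =
        (if k < i ∧ i < j then v else 0) + (if i < k ∧ k < j then v else 0) +
        (if i < j ∧ j < k then v else 0) + (if i < j ∧ k = i then v else 0) +
        (if i < j ∧ k = j then v else 0) := by
    intro i j k v
    by_cases hij : i < j
    · rcases lt_trichotomy k i with h | h | h
      · have h2' : ¬ i < k := asymm h
        have h3' : ¬ j < k := asymm (h.trans hij)
        have h4' : k ≠ j := (h.trans hij).ne
        simp [hij, h, h2', h3', h.ne, h4']
      · subst h
        simp [hij, lt_irrefl, hij.ne, asymm hij]
      · rcases lt_trichotomy k j with h' | h' | h'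
        · simp [hij, h, asymm h, h', h.ne', h'.ne, asymm h']
        · subst h'
          simp [hij, asymm h, lt_irrefl, h.ne']
        · simp [hij, h, h', asymm h, asymm h', h.ne', h'.ne']
    · have hnot : ¬ (i < k ∧ k < j) := fun ⟨a, b⟩ => hij (a.trans b)
      simp [hij, hnot]
  -- the three reindexed triple sums
  have ht1 : (∑ i, ∑ j, ∑ k, if k < i ∧ i < j then y i * y j * y k else 0) = T := by
    rw [hswap3 (fun i j k => if k < i ∧ i < j then y i * y j * y k else 0), hTdef]
    refine Finset.sum_congr rfl fun k _ => Finset.sum_congr rfl fun i _ =>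
      Finset.sum_congr rfl fun j _ => ?_
    exact if_congr Iff.rfl (by ring) rfl
  have ht2 : (∑ i, ∑ j, ∑ k, if i < k ∧ k < j then y i * y j * y k else 0) = T := by
    rw [hTdef]
    refine Finset.sum_congr rfl fun i _ => ?_
    rw [Finset.sum_comm]
    exact Finset.sum_congr rfl fun k _ => Finset.sum_congr rfl fun j _ =>
      if_congr Iff.rfl (by ring) rfl
  have ht4 : (∑ i, ∑ j, ∑ k, if i < j ∧ k = i then y i * y j * y k else 0) = A := by
    rw [hA]
    refine Finset.sum_congr rfl fun i _ => Finset.sum_congr rfl fun j _ => ?_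
    by_cases hij : i < j
    · simp only [hij, true_and, if_true]
      rw [Finset.sum_ite_eq' Finset.univ i (fun k => y i * y j * y k)]
      simp only [Finset.mem_univ, if_true]
      rw [mul_right_comm, hsq i]
    · simp [hij]
  have ht5 : (∑ i, ∑ j, ∑ k, if i < j ∧ k = j then y i * y j * y k else 0) = A := by
    rw [hA]
    refine Finset.sum_congr rfl fun i _ => Finset.sum_congr rfl fun j _ => ?_
    by_cases hij : i < j
    · simp only [hij, true_and, if_true]
      rw [Finset.sum_ite_eq' Finset.univ j (fun k => y i * y j * y k)]
      simp only [Finset.mem_univ, if_true]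
      rw [mul_assoc, hsq j]
    · simp [hij]
  -- second key identity : A * S = 3 * T + 2 * A
  have h3 : A * S = 3 * T + 2 * A := by
    have e1 : A * S = ∑ i, ∑ j, ∑ k, if i < j then y i * y j * y k else 0 := by
      rw [hA, Finset.sum_mul]
      refine Finset.sum_congr rfl fun i _ => ?_
      rw [Finset.sum_mul]
      refine Finset.sum_congr rfl fun j _ => ?_
      by_cases hij : i < j
      · simp only [hij, if_true]
        rw [hS, Finset.mul_sum]
      · simp [hij]
    have e2 : (∑ i, ∑ j, ∑ k, if i < j then y i * y j * y k else 0) = T + T + T + A + A := by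
      calc (∑ i, ∑ j, ∑ k, if i < j then y i * y j * y k else 0)
          = ∑ i, ∑ j, ∑ k,
            ((if k < i ∧ i < j then y i * y j * y k else 0) +
             (if i < k ∧ k < j then y i * y j * y k else 0) +
             (if i < j ∧ j < k then y i * y j * y k else 0) +
             (if i < j ∧ k = i then y i * y j * y k else 0) +
             (if i < j ∧ k = j then y i * y j * y k else 0)) := by
            exact Finset.sum_congr rfl fun i _ => Finset.sum_congr rfl fun j _ =>
              Finset.sum_congr rfl fun k _ => hsplit5 i j k _
        _ = (∑ i, ∑ j, ∑ k, if k < i ∧ i < j then y i * y j * y k else 0)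
            + (∑ i, ∑ j, ∑ k, if i < k ∧ k < j then y i * y j * y k else 0)
            + (∑ i, ∑ j, ∑ k, if i < j ∧ j < k then y i * y j * y k else 0)
            + (∑ i, ∑ j, ∑ k, if i < j ∧ k = i then y i * y j * y k else 0)
            + (∑ i, ∑ j, ∑ k, if i < j ∧ k = j then y i * y j * y k else 0) := by
            simp only [Finset.sum_add_distrib]
        _ = T + T + T + A + A := by rw [ht1, ht2, ← hTdef, ht4, ht5]
    rw [e1, e2]; ring
  -- now pure arithmetic
  rw [Int.modEq_iff_dvd]
  have key : 3 * ((S - 2 * A + 4 * T) - S % 2) =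
      2 * S ^ 3 - 9 * S ^ 2 + 10 * S - 3 * (S % 2) := by
    linear_combination (7 - 2 * S) * h2 - 4 * h3
  suffices h8 : (8 : ℤ) ∣ 2 * S ^ 3 - 9 * S ^ 2 + 10 * S - 3 * (S % 2) by
    obtain ⟨c, hc⟩ := h8
    have h3d : 3 * ((S - 2 * A + 4 * T) - S % 2) = 8 * c := key.trans hc
    omega
  rcases Int.emod_two_eq S with h | h <;> rw [h]
  · have hq : S = 2 * (S / 2) := by omega
    rcases Int.even_or_odd (S / 2) with ⟨c, hc⟩ | ⟨c, hc⟩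
    · exact ⟨16 * c ^ 3 - 18 * c ^ 2 + 5 * c, by rw [hq, hc]; ring⟩
    · exact ⟨16 * c ^ 3 + 6 * c ^ 2 - c, by rw [hq, hc]; ring⟩
  · have hq : S = 2 * (S / 2) + 1 := by omega
    rcases Int.even_or_odd (S / 2) with ⟨c, hc⟩ | ⟨c, hc⟩
    · exact ⟨16 * c ^ 3 - 6 * c ^ 2 - c, by rw [hq, hc]; ring⟩
    · exact ⟨16 * c ^ 3 + 18 * c ^ 2 + 5 * c, by rw [hq, hc]; ring⟩
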